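/- Let K be a field, r ≥ 1 an integer, χ_1, …, χ_r pairwise distinct nonzero elements of K, and u ∈ K. Then Σ_{l=1}^{r} χ_l⁻¹ · ∏_{a≠l} (χ_l − u·χ_a)/(χ_l − χ_a) = u^{r−1} · Σ_{l=1}^{r} χ_l⁻¹. -/

import Mathlib

open Polynomial Finset

section Aux

variable {K : Type*} [Field K]

private lemma coeff_lagrange_basis (r : ℕ) (v : Fin r → K) (i : Fin r) :
    (Lagrange.basis Finset.univ v i).coeff (r - 1)
      = (∏ j ∈ Finset.univ.erase i, (v i - v j))⁻¹ := by
  have hcard : (Finset.univ.erase i).card = r - 1 := by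
    rw [Finset.card_erase_of_mem (Finset.mem_univ i), Finset.card_univ, Fintype.card_fin]
  have hN : (∏ j ∈ Finset.univ.erase i, (X - C (v j))).coeff (r - 1) = 1 := by
    have hmonic : (∏ j ∈ Finset.univ.erase i, (X - C (v j))).Monic :=
      monic_prod_of_monic _ _ fun j _ => monic_X_sub_C _
    have hdeg : (∏ j ∈ Finset.univ.erase i, (X - C (v j))).natDegree = r - 1 := by
      rw [natDegree_prod_of_monic _ _ fun j _ => monic_X_sub_C _]
      simp [hcard]
    rw [← hdeg]
    exact hmonic.coeff_natDegree
  have : Lagrange.basis Finset.univ v i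
      = C ((∏ j ∈ Finset.univ.erase i, (v i - v j))⁻¹)
        * ∏ j ∈ Finset.univ.erase i, (X - C (v j)) := by
    rw [Lagrange.basis]
    simp_rw [Lagrange.basisDivisor]
    rw [Finset.prod_mul_distrib, ← map_prod, ← Finset.prod_inv_distrib]
  rw [this, coeff_C_mul, hN, mul_one]

private lemma coeff_eq_sum_eval (r : ℕ) (v : Fin r → K) (hv : Function.Injective v)
    (p : K[X]) (hp : p.degree < r) :
    p.coeff (r - 1) = ∑ l : Fin r,
      p.eval (v l) * (∏ a ∈ Finset.univ.erase l, (v l - v a))⁻¹ := by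
  have hdeg : p.degree < (Finset.univ : Finset (Fin r)).card := by
    rwa [Finset.card_univ, Fintype.card_fin]
  have hint := Lagrange.eq_interpolate (v := v) hv.injOn hdeg
  conv_lhs => rw [hint]
  rw [Lagrange.interpolate_apply, finset_sum_coeff]
  refine Finset.sum_congr rfl fun l _ => ?_
  rw [coeff_C_mul, coeff_lagrange_basis]

private lemma sum_prod_eval (r : ℕ) (hr : 1 ≤ r) (v : Fin r → K)
    (hv : Function.Injective v) (u : K) :
    ∑ l : Fin r, (∏ a : Fin r, (u * v l - v a))
        * (∏ a ∈ Finset.univ.erase l, (v l - v a))⁻¹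
      = (u ^ r - u ^ (r - 1)) * ∑ l : Fin r, v l := by
  set W : K[X] := ∏ a : Fin r, (X - C (v a)) with hW
  have hWmonic : W.Monic := monic_prod_of_monic _ _ fun a _ => monic_X_sub_C _
  have hWdeg : W.natDegree = r := by
    rw [hW, natDegree_prod_of_monic _ _ fun a _ => monic_X_sub_C _]
    simp
  have hWcoeffr : W.coeff r = 1 := by
    have := hWmonic.coeff_natDegree
    rwa [hWdeg] at this
  have hWnext : W.coeff (r - 1) = -∑ l : Fin r, v l := by
    have h1 := prod_X_sub_C_nextCoeff (s := (Finset.univ : Finset (Fin r))) (f := v)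
    rw [nextCoeff, hWdeg, if_neg (by omega : ¬ r = 0)] at h1
    exact h1
  -- eval of W as a sum of coefficients
  have hWeval : ∀ y : K, W.eval y = ∑ k ∈ Finset.range (r + 1), W.coeff k * y ^ k := by
    intro y
    rw [eval_eq_sum_range' (by omega : W.natDegree < r + 1)]
  have hWeval' : ∀ y : K, ∑ k ∈ Finset.range r, W.coeff k * y ^ k = W.eval y - y ^ r := by
    intro y
    rw [hWeval y, Finset.sum_range_succ, hWcoeffr, one_mul]
    ring
  -- the auxiliary polynomial
  set p : K[X] := ∑ k ∈ Finset.range r, C (W.coeff k * (u ^ k - u ^ r)) * X ^ k with hp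
  have hpdeg : p.degree < r := by
    rw [hp]
    apply lt_of_le_of_lt (degree_sum_le _ _)
    rw [Finset.sup_lt_iff (by exact_mod_cast WithBot.bot_lt_coe r)]
    intro k hk
    apply lt_of_le_of_lt (degree_C_mul_X_pow_le _ _)
    exact_mod_cast Finset.mem_range.mp hk
  have hpcoeff : p.coeff (r - 1) = (u ^ r - u ^ (r - 1)) * ∑ l : Fin r, v l := by
    rw [hp, finset_sum_coeff]
    rw [Finset.sum_eq_single (r - 1)]
    · rw [coeff_C_mul, coeff_X_pow, if_pos rfl, mul_one, hWnext]; ring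
    · intro k _ hk
      rw [coeff_C_mul, coeff_X_pow, if_neg (Ne.symm hk), mul_zero]
    · intro h
      exact absurd (Finset.mem_range.mpr (by omega)) h
  have hpeval : ∀ l : Fin r, p.eval (v l) = ∏ a : Fin r, (u * v l - v a) := by
    intro l
    have hWvl : W.eval (v l) = 0 := by
      rw [hW, eval_prod]
      apply Finset.prod_eq_zero (Finset.mem_univ l)
      simp
    have : p.eval (v l) = ∑ k ∈ Finset.range r, W.coeff k * (u ^ k - u ^ r) * (v l) ^ k := by
      rw [hp, eval_finset_sum]
      simp [mul_comm]
    rw [this]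
    have expand : ∀ k, W.coeff k * (u ^ k - u ^ r) * (v l) ^ k
        = W.coeff k * (u * v l) ^ k - u ^ r * (W.coeff k * (v l) ^ k) := by
      intro k; rw [mul_pow]; ring
    rw [Finset.sum_congr rfl fun k _ => expand k, Finset.sum_sub_distrib, ← Finset.mul_sum,
      hWeval', hWeval', hWvl]
    have : W.eval (u * v l) = ∏ a : Fin r, (u * v l - v a) := by
      rw [hW, eval_prod]; simp
    rw [← this, mul_pow]
    ring
  calc ∑ l : Fin r, (∏ a : Fin r, (u * v l - v a))
        * (∏ a ∈ Finset.univ.erase l, (v l - v a))⁻¹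
      = ∑ l : Fin r, p.eval (v l) * (∏ a ∈ Finset.univ.erase l, (v l - v a))⁻¹ := by
        exact Finset.sum_congr rfl fun l _ => by rw [hpeval l]
    _ = p.coeff (r - 1) := (coeff_eq_sum_eval r v hv p hpdeg).symm
    _ = (u ^ r - u ^ (r - 1)) * ∑ l : Fin r, v l := hpcoeff

private lemma sum_prod_ratio_aux (r : ℕ) (hr : 1 ≤ r) (v : Fin r → K)
    (hv : Function.Injective v) (u : K) :
    ∑ l : Fin r, v l * ∏ a ∈ Finset.univ.erase l, (u * v l - v a) / (v l - v a)
      = u ^ (r - 1) * ∑ l : Fin r, v l := by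
  by_cases hu : u = 1
  · subst hu
    simp only [one_mul, one_pow]
    refine Finset.sum_congr rfl fun l _ => ?_
    rw [Finset.prod_congr rfl fun a ha => ?_, Finset.prod_const_one, mul_one]
    have hne : v l - v a ≠ 0 := sub_ne_zero.mpr (hv.ne (Finset.ne_of_mem_erase ha).symm)
    exact div_self hne
  · have hu1 : u - 1 ≠ 0 := sub_ne_zero.mpr hu
    apply mul_left_cancel₀ hu1
    have key := sum_prod_eval r hr v hv u
    calc (u - 1) * ∑ l : Fin r, v l * ∏ a ∈ Finset.univ.erase l, (u * v l - v a) / (v l - v a)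
        = ∑ l : Fin r, (∏ a : Fin r, (u * v l - v a))
            * (∏ a ∈ Finset.univ.erase l, (v l - v a))⁻¹ := by
          rw [Finset.mul_sum]
          refine Finset.sum_congr rfl fun l _ => ?_
          rw [Finset.prod_div_distrib]
          have hsplit : ∏ a : Fin r, (u * v l - v a)
              = (u * v l - v l) * ∏ a ∈ Finset.univ.erase l, (u * v l - v a) :=
            (Finset.mul_prod_erase Finset.univ _ (Finset.mem_univ l)).symm
          rw [hsplit]
          have : u * v l - v l = (u - 1) * v l := by ring
          rw [this]
          field_simp
      _ = (u ^ r - u ^ (r - 1)) * ∑ l : Fin r, v l := key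
      _ = (u - 1) * (u ^ (r - 1) * ∑ l : Fin r, v l) := by
          have : u ^ r = u * u ^ (r - 1) := by
            conv_lhs => rw [show r = 1 + (r - 1) by omega]
            rw [pow_add, pow_one]
          rw [this]; ring

end Aux

/-- For a field `K`, `r ≥ 1`, pairwise distinct nonzero `χ_1, …, χ_r ∈ K`
and `u ∈ K`, one has
`Σ_{l=1}^{r} χ_l⁻¹ ∏_{a≠l} (χ_l − u·χ_a)/(χ_l − χ_a) = u^{r−1} · Σ_{l=1}^{r} χ_l⁻¹`. -/
theorem sum_inv_prod_ratio_eq {K : Type*} [Field K] (r : ℕ) (hr : 1 ≤ r)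
    (χ : Fin r → K) (hχ : Function.Injective χ) (hχ0 : ∀ l, χ l ≠ 0) (u : K) :
    ∑ l : Fin r, (χ l)⁻¹ * ∏ a ∈ Finset.univ.erase l, (χ l - u * χ a) / (χ l - χ a)
      = u ^ (r - 1) * ∑ l : Fin r, (χ l)⁻¹ := by
  set v : Fin r → K := fun l => (χ l)⁻¹ with hvdef
  have hv : Function.Injective v := fun a b h => hχ (by
    have : (χ a)⁻¹ = (χ b)⁻¹ := h
    exact inv_injective this)
  have key := sum_prod_ratio_aux r hr v hv u
  rw [← key]
  refine Finset.sum_congr rfl fun l _ => ?_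
  congr 1
  refine Finset.prod_congr rfl fun a ha => ?_
  have hal : a ≠ l := Finset.ne_of_mem_erase ha
  have hne1 : χ l - χ a ≠ 0 := sub_ne_zero.mpr (fun h => hal (hχ h).symm)
  have hne2 : v l - v a ≠ 0 := sub_ne_zero.mpr (fun h => hal (hv h).symm)
  rw [div_eq_div_iff hne1 hne2, hvdef]
  field_simp [hχ0 l, hχ0 a]
  ring
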